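/- arXiv:2504.04521 — 2 statements merged into one kernel-verified Lean document; each statement's English description precedes it below -/
import Mathlib

section
/- Fix c > 0 and define δ_c(x) = B_c(x) - R_c(x) on (0,c), where B_c(x) = Γ(x)Γ(c-x)/Γ(c) and R_c(x) = -ψ(x) - ψ(c-x) - 2γ. Then δ_c(x) tends to 0 as x → 0⁺. -/
noncomputable def digamma (x : ℝ) : ℝ := deriv (fun y : ℝ => Real.log (Real.Gamma y)) x

noncomputable def Bc (c x : ℝ) : ℝ := Real.Gamma x * Real.Gamma (c - x) / Real.Gamma c

noncomputable def Rc (c x : ℝ) : ℝ :=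
  -digamma x - digamma (c - x) - 2 * Real.eulerMascheroniConstant

open Real Filter Set

lemma gamma_pos_ne {x : ℝ} (hx : 0 < x) : ∀ m : ℕ, x ≠ -m := by
  intro m
  have : (-m : ℝ) ≤ 0 := by simp [Nat.cast_nonneg]
  exact fun h => absurd (h ▸ hx) (by linarith)

lemma analyticOnNhd_realGamma : AnalyticOnNhd ℝ Real.Gamma (Set.Ioi 0) := by
  have hC : AnalyticOnNhd ℂ Complex.Gamma {s : ℂ | 0 < s.re} := by
    refine DifferentiableOn.analyticOnNhd (fun s hs => ?_) (isOpen_lt continuous_const Complex.continuous_re)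
    refine (Complex.differentiableAt_Gamma s (fun m => ?_)).differentiableWithinAt
    intro h
    have hre : (0:ℝ) < s.re := hs
    rw [h] at hre
    simp only [Complex.neg_re, Complex.natCast_re] at hre
    have : (0:ℝ) ≤ m := Nat.cast_nonneg m
    linarith
  intro x hx
  have hx' : (0:ℝ) < x := hx
  have a1 : AnalyticAt ℂ Complex.Gamma (x : ℂ) := hC (x : ℂ) (show 0 < (Complex.ofReal x).re by simpa using hx')
  have a3 : AnalyticAt ℝ (fun y : ℝ => Complex.Gamma (y : ℂ)) x :=
    a1.restrictScalars.comp (Complex.ofRealCLM.analyticAt x)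
  have a4 : AnalyticAt ℝ (fun y : ℝ => (Complex.Gamma (y : ℂ)).re) x :=
    (Complex.reCLM.analyticAt _).comp a3
  refine a4.congr ?_
  filter_upwards with y
  rw [Complex.Gamma_ofReal]
  simp

lemma hasDerivAt_realGamma {x : ℝ} (hx : 0 < x) :
    HasDerivAt Real.Gamma (deriv Real.Gamma x) x :=
  (Real.differentiableAt_Gamma (gamma_pos_ne hx)).hasDerivAt

lemma digamma_eq {x : ℝ} (hx : 0 < x) : digamma x = deriv Real.Gamma x / Real.Gamma x := by
  have h := (hasDerivAt_realGamma hx).log (Real.Gamma_pos_of_pos hx).ne'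
  exact h.deriv

lemma continuousAt_digamma {p : ℝ} (hp : 0 < p) : ContinuousAt digamma p := by
  have hA := analyticOnNhd_realGamma
  have hD : AnalyticOnNhd ℝ (deriv Real.Gamma) (Set.Ioi 0) := hA.deriv
  have hcont : ContinuousAt (fun y => deriv Real.Gamma y / Real.Gamma y) p :=
    ((hD p hp).continuousAt).div ((hA p hp).continuousAt) (Real.Gamma_pos_of_pos hp).ne'
  refine hcont.congr ?_
  filter_upwards [Ioi_mem_nhds hp] with y hy
  exact (digamma_eq hy).symm

lemma digamma_one : digamma 1 = -Real.eulerMascheroniConstant := by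
  rw [digamma_eq one_pos, Real.hasDerivAt_Gamma_one.deriv, Real.Gamma_one, div_one]

lemma deriv_gamma_add_one {x : ℝ} (hx : 0 < x) :
    deriv Real.Gamma (x + 1) = Real.Gamma x + x * deriv Real.Gamma x := by
  have hx1 : 0 < x + 1 := by linarith
  have h1 : HasDerivAt (fun y : ℝ => Real.Gamma (y + 1)) (deriv Real.Gamma (x + 1)) x := by
    have := (hasDerivAt_realGamma hx1).comp x ((hasDerivAt_id x).add_const 1)
    simpa [Function.comp_def] using this
  have h2 : HasDerivAt (fun y : ℝ => y * Real.Gamma y)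
      (1 * Real.Gamma x + x * deriv Real.Gamma x) x :=
    (hasDerivAt_id x).mul (hasDerivAt_realGamma hx)
  have heq : (fun y : ℝ => y * Real.Gamma y) =ᶠ[nhds x] (fun y : ℝ => Real.Gamma (y + 1)) := by
    filter_upwards [Ioi_mem_nhds hx] with y hy
    exact (Real.Gamma_add_one (ne_of_gt hy)).symm
  have h1' : HasDerivAt (fun y : ℝ => y * Real.Gamma y) (deriv Real.Gamma (x + 1)) x :=
    h1.congr_of_eventuallyEq heq
  have := h1'.unique h2
  rw [this]; ring

lemma digamma_add_one {x : ℝ} (hx : 0 < x) : digamma (x + 1) = 1 / x + digamma x := by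
  have hx1 : 0 < x + 1 := by linarith
  have hG : Real.Gamma x ≠ 0 := (Real.Gamma_pos_of_pos hx).ne'
  rw [digamma_eq hx1, digamma_eq hx, deriv_gamma_add_one hx,
    Real.Gamma_add_one (ne_of_gt hx)]
  field_simp

theorem stmt_9 (c : ℝ) (hc : 0 < c) :
    Filter.Tendsto (fun x => Bc c x - Rc c x) (nhdsWithin 0 (Set.Ioi 0)) (nhds 0) := by
  set γ := Real.eulerMascheroniConstant
  set G := Real.Gamma
  have hGc : G c ≠ 0 := (Real.Gamma_pos_of_pos hc).ne'
  -- auxiliary maps into punctured neighborhoods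
  have m1 : Filter.Tendsto (fun x : ℝ => 1 + x) (nhdsWithin 0 (Set.Ioi 0)) (nhdsWithin 1 {1}ᶜ) := by
    rw [tendsto_nhdsWithin_iff]
    constructor
    · have : Filter.Tendsto (fun x : ℝ => 1 + x) (nhds 0) (nhds 1) := by
        simpa [Pi.add_def] using (continuous_const.add continuous_id).tendsto (0 : ℝ)
      exact this.mono_left nhdsWithin_le_nhds
    · filter_upwards [self_mem_nhdsWithin] with x hx
      have : (0:ℝ) < x := hx
      simp only [Set.mem_compl_iff, Set.mem_singleton_iff]
      intro h
      nlinarith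
  have mc : Filter.Tendsto (fun x : ℝ => c - x) (nhdsWithin 0 (Set.Ioi 0)) (nhdsWithin c {c}ᶜ) := by
    rw [tendsto_nhdsWithin_iff]
    constructor
    · have : Filter.Tendsto (fun x : ℝ => c - x) (nhds 0) (nhds c) := by
        simpa [Pi.sub_def] using (continuous_const.sub continuous_id).tendsto (0 : ℝ)
      exact this.mono_left nhdsWithin_le_nhds
    · filter_upwards [self_mem_nhdsWithin] with x hx
      have : (0:ℝ) < x := hx
      simp only [Set.mem_compl_iff, Set.mem_singleton_iff]
      intro h
      nlinarith
  -- T1 : G x - 1/x → -γ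
  have slope1 : Filter.Tendsto (slope G 1) (nhdsWithin 1 {1}ᶜ) (nhds (-γ)) :=
    hasDerivAt_iff_tendsto_slope.mp Real.hasDerivAt_Gamma_one
  have T1 : Filter.Tendsto (fun x => G x - 1 / x) (nhdsWithin 0 (Set.Ioi 0)) (nhds (-γ)) := by
    refine (slope1.comp m1).congr' ?_
    filter_upwards [self_mem_nhdsWithin] with x hx
    have hx0 : (0:ℝ) < x := hx
    have hG1 : G 1 = 1 := Real.Gamma_one
    have hadd : G (1 + x) = x * G x := by
      rw [add_comm]; exact Real.Gamma_add_one hx0.ne'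
    simp only [Function.comp, slope_def_field, hG1, hadd]
    field_simp
    linear_combination (x * G x - 1) * (mul_inv_cancel₀ hx0.ne')
  -- T3 : (G(c-x)/G c - 1)/x → -(deriv G c / G c)
  have slopec : Filter.Tendsto (slope G c) (nhdsWithin c {c}ᶜ) (nhds (deriv G c)) :=
    hasDerivAt_iff_tendsto_slope.mp (hasDerivAt_realGamma hc)
  have T3 : Filter.Tendsto (fun x => (G (c - x) / G c - 1) / x) (nhdsWithin 0 (Set.Ioi 0))
      (nhds (-deriv G c / G c)) := by
    have h := ((slopec.comp mc).neg).div_const (G c)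
    refine h.congr' ?_
    filter_upwards [self_mem_nhdsWithin] with x hx
    have hx0 : (0:ℝ) < x := hx
    simp only [Function.comp, slope_def_field]
    have hne : c - x - c ≠ 0 := by intro h'; nlinarith [hx0]
    field_simp
    ring
  -- T4 : 1/x + digamma x → -γ
  have T4 : Filter.Tendsto (fun x => 1 / x + digamma x) (nhdsWithin 0 (Set.Ioi 0)) (nhds (-γ)) := by
    have hcont : Filter.Tendsto (fun x : ℝ => digamma (x + 1)) (nhdsWithin 0 (Set.Ioi 0))
        (nhds (digamma 1)) := by
      have h1 : Filter.Tendsto (fun x : ℝ => x + 1) (nhdsWithin 0 (Set.Ioi 0)) (nhds 1) := by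
        have : Filter.Tendsto (fun x : ℝ => x + 1) (nhds 0) (nhds 1) := by
          simpa [Pi.add_def] using (continuous_id.add continuous_const).tendsto (0 : ℝ)
        exact this.mono_left nhdsWithin_le_nhds
      exact (continuousAt_digamma one_pos).tendsto.comp h1
    rw [digamma_one] at hcont
    refine hcont.congr' ?_
    filter_upwards [self_mem_nhdsWithin] with x hx
    exact digamma_add_one hx
  -- T5 : digamma (c - x) → digamma c
  have T5 : Filter.Tendsto (fun x => digamma (c - x)) (nhdsWithin 0 (Set.Ioi 0))
      (nhds (digamma c)) := by
    have h1 : Filter.Tendsto (fun x : ℝ => c - x) (nhdsWithin 0 (Set.Ioi 0)) (nhds c) := by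
      have : Filter.Tendsto (fun x : ℝ => c - x) (nhds 0) (nhds c) := by
        simpa [Pi.sub_def] using (continuous_const.sub continuous_id).tendsto (0 : ℝ)
      exact this.mono_left nhdsWithin_le_nhds
    exact (continuousAt_digamma hc).tendsto.comp h1
  -- T2 : G (c - x) / G c → 1
  have T2 : Filter.Tendsto (fun x => G (c - x) / G c) (nhdsWithin 0 (Set.Ioi 0)) (nhds 1) := by
    have h1 : Filter.Tendsto (fun x : ℝ => c - x) (nhdsWithin 0 (Set.Ioi 0)) (nhds c) := by
      have : Filter.Tendsto (fun x : ℝ => c - x) (nhds 0) (nhds c) := by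
        simpa [Pi.sub_def] using (continuous_const.sub continuous_id).tendsto (0 : ℝ)
      exact this.mono_left nhdsWithin_le_nhds
    have h2 : Filter.Tendsto (fun x => G (c - x)) (nhdsWithin 0 (Set.Ioi 0)) (nhds (G c)) :=
      ((Real.differentiableAt_Gamma (gamma_pos_ne hc)).continuousAt.tendsto).comp h1
    have := h2.div_const (G c)
    rwa [div_self hGc] at this
  -- combine
  have Tsum : Filter.Tendsto
      (fun x => (G x - 1 / x) * (G (c - x) / G c) + (G (c - x) / G c - 1) / x
        + (1 / x + digamma x) + digamma (c - x) + 2 * γ)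
      (nhdsWithin 0 (Set.Ioi 0))
      (nhds ((-γ) * 1 + (-deriv G c / G c) + (-γ) + digamma c + 2 * γ)) :=
    ((((T1.mul T2).add T3).add T4).add T5).add tendsto_const_nhds
  have hlim : (-γ) * 1 + (-deriv G c / G c) + (-γ) + digamma c + 2 * γ = 0 := by
    rw [digamma_eq hc]; ring
  rw [hlim] at Tsum
  refine Tsum.congr' ?_
  filter_upwards [self_mem_nhdsWithin] with x hx
  have hx0 : (0:ℝ) < x := hx
  show _ = Bc c x - Rc c x
  simp only [Bc, Rc, G]
  field_simp
  ring
end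

section
/- Fix c > 0. The function δ_c(x) = B_c(x) - R_c(x), with B_c(x) = Γ(x)Γ(c-x)/Γ(c) and R_c(x) = -ψ(x) - ψ(c-x) - 2γ, is strictly positive on (0,c); in particular B(x, c-x) > R(x, c-x) for all x ∈ (0,c). -/
open Real Set Filter Topology MeasureTheory intervalIntegral

lemma logGamma_diff {x : ℝ} (hx : 0 < x) :
    DifferentiableAt ℝ (fun y : ℝ => Real.log (Real.Gamma y)) x := by
  exact (Real.differentiableAt_Gamma (fun m => by nlinarith [Nat.cast_nonneg (α := ℝ) m])).log
    (Real.Gamma_ne_zero (fun m => by nlinarith [Nat.cast_nonneg (α := ℝ) m]))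

lemma digamma_rec {x : ℝ} (hx : 0 < x) : digamma (x + 1) = digamma x + 1 / x := by
  unfold digamma
  rw [← deriv_comp_add_const, one_div, ← Real.deriv_log,
    ← deriv_fun_add (logGamma_diff hx) (Real.differentiableAt_log hx.ne')]
  apply Filter.EventuallyEq.deriv_eq
  filter_upwards [eventually_gt_nhds hx] with y hy
  simp only [Real.Gamma_add_one hy.ne', Real.log_mul hy.ne' (Real.Gamma_pos_of_pos hy).ne',
    add_comm]

lemma digamma_nat (n : ℕ) : digamma (n + 1) = -Real.eulerMascheroniConstant + harmonic n := by
  have h1 : (0:ℝ) < n + 1 := by positivity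
  unfold digamma
  rw [deriv.log (Real.differentiableAt_Gamma (fun m => by nlinarith [Nat.cast_nonneg (α := ℝ) m]))
    (Real.Gamma_pos_of_pos h1).ne', Real.deriv_Gamma_nat, Real.Gamma_nat_eq_factorial]
  rw [mul_comm, mul_div_assoc, div_self (by positivity : (n.factorial:ℝ) ≠ 0), mul_one]

lemma digamma_mono {x y : ℝ} (hx : 0 < x) (hxy : x ≤ y) : digamma x ≤ digamma y := by
  have := (Real.convexOn_log_Gamma).monotoneOn_deriv (fun z hz => logGamma_diff hz)
  exact this hx (lt_of_lt_of_le hx hxy) hxy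

noncomputable def Ux (x : ℝ) (n : ℕ) : ℝ :=
  ∑ k ∈ Finset.range n, (1 / (k + 1 : ℝ) - 1 / (x + k))

lemma digamma_add_nat {x : ℝ} (hx : 0 < x) (n : ℕ) :
    digamma (x + n) = digamma x + ∑ k ∈ Finset.range n, 1 / (x + k) := by
  induction n with
  | zero => simp
  | succ n ih =>
    have h1 : (0:ℝ) < x + n := by positivity
    rw [Nat.cast_succ, ← add_assoc, digamma_rec h1, ih, Finset.sum_range_succ]
    ring

lemma harmonic_cast (n : ℕ) : (harmonic n : ℝ) = ∑ k ∈ Finset.range n, 1 / (k + 1 : ℝ) := by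
  simp [harmonic, one_div]

lemma harmonic_gap (a : ℕ) : ∀ b : ℕ, (harmonic (a+b) : ℝ) ≤ harmonic a + b / (a+1) := by
  intro b
  induction b with
  | zero => simp
  | succ b ih =>
    have h1 : (harmonic (a+b+1) : ℝ) = harmonic (a+b) + 1/((a:ℝ)+b+1) := by
      rw [harmonic_succ]; push_cast; ring
    have h2 : (1:ℝ)/((a:ℝ)+b+1) ≤ 1/((a:ℝ)+1) := by
      apply one_div_le_one_div_of_le <;> [positivity; (push_cast; linarith [Nat.cast_nonneg (α := ℝ) b])]
    have h3 : ((b:ℝ)+1)/((a:ℝ)+1) = (b:ℝ)/((a:ℝ)+1) + 1/((a:ℝ)+1) := by ring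
    have : a + (b+1) = (a+b)+1 := by ring
    rw [this, h1]
    push_cast
    push_cast at ih
    linarith

lemma tendsto_Ux {x : ℝ} (hx : 0 < x) :
    Tendsto (fun n => Ux x n) atTop (𝓝 (digamma x + Real.eulerMascheroniConstant)) := by
  set m : ℕ := ⌈x⌉₊ with hm
  have hxm : x ≤ m := Nat.le_ceil x
  have hm1 : 1 ≤ m := Nat.one_le_ceil_iff.mpr hx
  have key : ∀ n : ℕ, |(-Real.eulerMascheroniConstant + Ux x (n+1)) - digamma x|
      ≤ m / ((n:ℝ)+1) := by
    intro n
    have hs : (-Real.eulerMascheroniConstant + Ux x (n+1)) =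
        -Real.eulerMascheroniConstant + (harmonic (n+1) : ℝ)
          - ∑ k ∈ Finset.range (n+1), 1 / (x + k) := by
      rw [harmonic_cast]
      simp only [Ux, Finset.sum_sub_distrib]
      ring
    have hD := digamma_add_nat hx (n+1)
    have hN := digamma_nat n
    have hNm := digamma_nat (n+m)
    push_cast at hD hNm
    have hHr1 : ((harmonic (n+1) : ℝ)) = (harmonic n : ℝ) + 1 / ((n:ℝ)+1) := by
      rw [harmonic_succ]; push_cast; ring
    have hgap := harmonic_gap n m
    have hup : digamma x ≤ -Real.eulerMascheroniConstant + Ux x (n+1)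
        + ((m:ℝ) - 1) / ((n:ℝ)+1) := by
      have h1 : digamma (x + ((n:ℝ) + 1)) ≤ digamma ((n:ℝ) + (m:ℝ) + 1) := by
        apply digamma_mono (by positivity)
        linarith
      rw [hD, hNm] at h1
      rw [hs, hHr1]
      have : ((m:ℝ) - 1) / ((n:ℝ)+1) = (m:ℝ)/((n:ℝ)+1) - 1/((n:ℝ)+1) := by ring
      rw [this]
      linarith
    have hlo : -Real.eulerMascheroniConstant + Ux x (n+1) - 1 / ((n:ℝ)+1) ≤ digamma x := by
      have h1 : digamma ((n:ℝ) + 1) ≤ digamma (x + ((n:ℝ) + 1)) := by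
        apply digamma_mono (by positivity)
        linarith
      rw [hD, hN] at h1
      rw [hs, hHr1]; linarith
    rw [abs_le]
    have hm1' : (1:ℝ) ≤ (m:ℝ) := by exact_mod_cast hm1
    have hpos : (0:ℝ) < (n:ℝ)+1 := by positivity
    have ha : (1:ℝ)/((n:ℝ)+1) ≤ (m:ℝ)/((n:ℝ)+1) := by
      gcongr
    have hb : ((m:ℝ)-1)/((n:ℝ)+1) ≤ (m:ℝ)/((n:ℝ)+1) := by
      gcongr
      linarith
    constructor <;> linarith
  have h2 : Tendsto (fun n : ℕ => -Real.eulerMascheroniConstant + Ux x (n+1)) atTop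
      (𝓝 (digamma x)) := by
    have hb : Tendsto (fun n : ℕ => (m:ℝ) / ((n:ℝ)+1)) atTop (𝓝 0) := by
      simpa [div_eq_mul_inv] using tendsto_one_div_add_atTop_nhds_zero_nat.const_mul (m:ℝ)
    rw [tendsto_iff_dist_tendsto_zero]
    apply squeeze_zero (fun n => dist_nonneg) (fun n => by simpa [Real.dist_eq] using key n) hb
  have h3 : Tendsto (fun n : ℕ => Ux x (n+1)) atTop
      (𝓝 (digamma x + Real.eulerMascheroniConstant)) := by
    have := h2.add_const Real.eulerMascheroniConstant
    simpa using this.congr (fun n => by ring)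
  exact (tendsto_add_atTop_iff_nat 1).mp h3

noncomputable def Fx (x t : ℝ) : ℝ := if t = 1 then x - 1 else (1 - t ^ (x-1)) / (1 - t)

lemma continuousOn_Fx {x : ℝ} : ContinuousOn (Fx x) (Set.Icc (1/2 : ℝ) 1) := by
  intro t ht
  rcases eq_or_lt_of_le ht.2 with h1 | h1
  · -- t = 1
    subst h1
    rw [← continuousWithinAt_diff_self]
    have hslope : Tendsto (slope (fun u : ℝ => u ^ (x-1)) 1) (𝓝[≠] (1:ℝ)) (𝓝 (x-1)) := by
      have hd : HasDerivAt (fun u : ℝ => u ^ (x-1)) ((x-1) * (1:ℝ) ^ (x-1-1)) 1 :=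
        Real.hasDerivAt_rpow_const (Or.inl one_ne_zero)
      rw [Real.one_rpow, mul_one] at hd
      exact hasDerivAt_iff_tendsto_slope.mp hd
    have hmono : 𝓝[Set.Icc (1/2:ℝ) 1 \ {1}] (1:ℝ) ≤ 𝓝[≠] (1:ℝ) :=
      nhdsWithin_mono _ (fun u hu => hu.2)
    have heq : ∀ u ∈ Set.Icc (1/2:ℝ) 1 \ {1},
        slope (fun u : ℝ => u ^ (x-1)) 1 u = Fx x u := by
      intro u hu
      have hu1 : u ≠ 1 := hu.2
      simp only [Fx, if_neg hu1, slope_def_field]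
      rw [Real.one_rpow, show (1 - u^(x-1)) = -(u^(x-1) - 1) by ring,
        show (1-u) = -(u-1) by ring, neg_div_neg_eq]
    have : Tendsto (Fx x) (𝓝[Set.Icc (1/2:ℝ) 1 \ {1}] (1:ℝ)) (𝓝 (x-1)) := by
      refine (hslope.mono_left hmono).congr' ?_
      filter_upwards [eventually_mem_nhdsWithin] with u hu using heq u hu
    have hF1 : Fx x 1 = x - 1 := by simp [Fx]
    rw [ContinuousWithinAt, hF1]
    exact this
  · -- t < 1
    have hcong : Fx x =ᶠ[𝓝 t] fun u => (1 - u ^ (x-1)) / (1 - u) := by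
      filter_upwards [eventually_lt_nhds h1] with u hu
      simp [Fx, hu.ne]
    have ht0 : t ≠ 0 := by
      have := ht.1; intro h; rw [h] at this; norm_num at this
    have hc : ContinuousAt (fun u : ℝ => (1 - u ^ (x-1)) / (1 - u)) t := by
      apply ContinuousAt.div
      · exact continuousAt_const.sub (Real.continuousAt_rpow_const _ _ (Or.inl ht0))
      · exact continuousAt_const.sub continuousAt_id
      · exact sub_ne_zero.mpr h1.ne'
    exact (hc.congr hcong.symm).continuousWithinAt

lemma intervalIntegrable_aux {x : ℝ} (hx : 0 < x) :
    IntervalIntegrable (fun t : ℝ => (1 - t ^ (x-1)) / (1 - t)) volume 0 1 := by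
  apply IntervalIntegrable.trans (b := (1/2 : ℝ))
  · -- on [0, 1/2]
    have h1 : IntervalIntegrable (fun t : ℝ => 1 - t ^ (x-1)) volume 0 (1/2) :=
      intervalIntegrable_const.sub (intervalIntegrable_rpow' (by linarith))
    have h2 : ContinuousOn (fun t : ℝ => (1 - t)⁻¹) (Set.uIcc 0 (1/2:ℝ)) := by
      apply ContinuousOn.inv₀ (by fun_prop)
      intro t ht
      rw [Set.uIcc_of_le (by norm_num : (0:ℝ) ≤ 1/2)] at ht
      have := ht.2
      intro h; rw [sub_eq_zero] at h; linarith
    simpa [div_eq_mul_inv] using h1.mul_continuousOn h2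
  · -- on [1/2, 1]
    have hF : IntervalIntegrable (Fx x) volume (1/2) 1 := by
      apply ContinuousOn.intervalIntegrable
      rw [Set.uIcc_of_le (by norm_num : (1/2:ℝ) ≤ 1)]
      exact continuousOn_Fx
    apply hF.congr_ae
    have : Fx x =ᵐ[volume] (fun t : ℝ => (1 - t ^ (x-1)) / (1 - t)) := by
      rw [Filter.eventuallyEq_iff_exists_mem]
      refine ⟨{(1:ℝ)}ᶜ, ?_, ?_⟩
      · rw [mem_ae_iff, compl_compl]
        exact measure_singleton 1
      · intro u hu
        have hu1 : u ≠ 1 := hu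
        simp [Fx, hu1]
    exact MeasureTheory.ae_restrict_of_ae this

lemma claimA {x : ℝ} (hx : 0 < x) (k : ℕ) :
    ∫ t in (0:ℝ)..1, ((t:ℝ)^k - t^(x + k - 1)) = 1/(k+1) - 1/(x+k) := by
  have hxk : (0:ℝ) < x + k := by positivity
  rw [intervalIntegral.integral_sub ((by fun_prop : Continuous fun t : ℝ => (t:ℝ)^k).intervalIntegrable 0 1)
    (intervalIntegrable_rpow' (by linarith))]
  rw [integral_pow, integral_rpow (Or.inl (by linarith))]
  rw [Real.one_rpow, Real.zero_rpow (by linarith : x + (k:ℝ) - 1 + 1 ≠ 0)]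
  rw [one_pow, zero_pow (Nat.succ_ne_zero k)]
  rw [show x + (k:ℝ) - 1 + 1 = x + k by ring]
  ring

lemma claimB {x : ℝ} (hx : 0 < x) (n : ℕ) :
    Ux x n = ∫ t in (0:ℝ)..1, ∑ k ∈ Finset.range n, ((t:ℝ)^k - t^(x + k - 1)) := by
  rw [intervalIntegral.integral_finset_sum]
  · unfold Ux
    refine Finset.sum_congr rfl (fun k _ => ?_)
    rw [claimA hx k]
  · intro k _
    exact ((by fun_prop : Continuous fun t : ℝ => (t:ℝ)^k).intervalIntegrable _ _).sub
      (intervalIntegrable_rpow' (by have := Nat.cast_nonneg (α := ℝ) k; linarith))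

lemma claimC {x : ℝ} (hx : 0 < x) (n : ℕ) :
    Ux x n = ∫ t in Set.Ioc (0:ℝ) 1, (1 - t^(x-1)) * (1 - (t:ℝ)^n) / (1-t) := by
  rw [claimB hx n, intervalIntegral.integral_of_le zero_le_one]
  apply MeasureTheory.setIntegral_congr_fun measurableSet_Ioc
  intro t ht
  have ht0 : 0 < t := ht.1
  have hrw : ∀ k : ℕ, t ^ (x + k - 1) = t^(x-1) * t^k := by
    intro k
    rw [show x + (k:ℝ) - 1 = (x-1) + k by ring, Real.rpow_add ht0, Real.rpow_natCast]
  simp only [hrw]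
  have hsum : ∑ k ∈ Finset.range n, ((t:ℝ)^k - t^(x-1) * t^k)
      = (1 - t^(x-1)) * ∑ k ∈ Finset.range n, (t:ℝ)^k := by
    rw [Finset.mul_sum]
    apply Finset.sum_congr rfl
    intro k _
    ring
  rw [hsum]
  rcases eq_or_lt_of_le ht.2 with h1 | h1
  · subst h1
    simp [Real.one_rpow]
  · rw [geom_sum_eq h1.ne]
    have h2 : t - 1 ≠ 0 := sub_ne_zero.mpr h1.ne
    have h3 : (1:ℝ) - t ≠ 0 := sub_ne_zero.mpr h1.ne'
    field_simp
    ring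

lemma tendsto_Ux_integral {x : ℝ} (hx : 0 < x) :
    Tendsto (fun n => Ux x n) atTop
      (𝓝 (∫ t in Set.Ioc (0:ℝ) 1, (1 - t^(x-1)) / (1-t))) := by
  have hfint : MeasureTheory.IntegrableOn (fun t : ℝ => (1 - t^(x-1)) / (1-t))
      (Set.Ioc 0 1) volume := by
    rw [← intervalIntegrable_iff_integrableOn_Ioc_of_le zero_le_one]
    exact intervalIntegrable_aux hx
  have key : Tendsto (fun n => ∫ t in Set.Ioc (0:ℝ) 1, (1 - t^(x-1)) * (1 - (t:ℝ)^n) / (1-t))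
      atTop (𝓝 (∫ t in Set.Ioc (0:ℝ) 1, (1 - t^(x-1)) / (1-t))) := by
    apply MeasureTheory.tendsto_integral_of_dominated_convergence
      (fun t => |(1 - t^(x-1)) / (1-t)|)
    · intro n
      apply Measurable.aestronglyMeasurable
      have hm : Measurable fun t : ℝ => t ^ (x-1) :=
        measurable_of_continuousOn_compl_singleton 0
          (fun t ht => (Real.continuousAt_rpow_const t _ (Or.inl ht)).continuousWithinAt)
      exact ((measurable_const.sub hm).mul
        (measurable_const.sub (measurable_id.pow_const n))).div
        (measurable_const.sub measurable_id)
    · exact hfint.abs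
    · intro n
      rw [MeasureTheory.ae_restrict_iff' measurableSet_Ioc]
      refine Filter.Eventually.of_forall (fun t ht => ?_)
      have h1 : (1 - t^(x-1)) * (1 - (t:ℝ)^n) / (1-t)
          = ((1 - t^(x-1)) / (1-t)) * (1 - (t:ℝ)^n) := by ring
      rw [Real.norm_eq_abs, h1, abs_mul]
      have h2 : |1 - (t:ℝ)^n| ≤ 1 := by
        rw [abs_le]
        have h3 : 0 ≤ (t:ℝ)^n := pow_nonneg ht.1.le n
        have h4 : (t:ℝ)^n ≤ 1 := pow_le_one₀ ht.1.le ht.2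
        constructor <;> linarith
      calc |(1 - t^(x-1)) / (1-t)| * |1 - (t:ℝ)^n|
          ≤ |(1 - t^(x-1)) / (1-t)| * 1 := by
            apply mul_le_mul_of_nonneg_left h2 (abs_nonneg _)
        _ = |(1 - t^(x-1)) / (1-t)| := mul_one _
    · rw [MeasureTheory.ae_restrict_iff' measurableSet_Ioc]
      refine Filter.Eventually.of_forall (fun t ht => ?_)
      rcases eq_or_lt_of_le ht.2 with h1 | h1
      · subst h1
        simp [Real.one_rpow]
      · have h2 : Tendsto (fun n : ℕ => (t:ℝ)^n) atTop (𝓝 0) := by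
          apply tendsto_pow_atTop_nhds_zero_of_lt_one ht.1.le h1
        have h3 : Tendsto (fun n : ℕ => (1 - t^(x-1)) * (1 - (t:ℝ)^n) / (1-t)) atTop
            (𝓝 ((1 - t^(x-1)) * (1 - 0) / (1-t))) := by
          apply Tendsto.div_const
          exact ((tendsto_const_nhds.sub h2).const_mul _)
        simpa using h3
  refine key.congr (fun n => (claimC hx n).symm)

lemma digamma_integral {x : ℝ} (hx : 0 < x) :
    digamma x + Real.eulerMascheroniConstant
      = ∫ t in Set.Ioc (0:ℝ) 1, (1 - t^(x-1)) / (1-t) :=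
  tendsto_nhds_unique (tendsto_Ux hx) (tendsto_Ux_integral hx)

lemma real_beta {a b : ℝ} (ha : 0 < a) (hb : 0 < b) :
    Real.Gamma a * Real.Gamma b / Real.Gamma (a+b)
      = ∫ t in (0:ℝ)..1, t^(a-1) * (1-t)^(b-1) := by
  have hC := Complex.Gamma_mul_Gamma_eq_betaIntegral
    (by simpa using ha : 0 < (a:ℂ).re) (by simpa using hb : 0 < (b:ℂ).re)
  have hB : Complex.betaIntegral a b = ((∫ t in (0:ℝ)..1, t^(a-1) * (1-t)^(b-1) : ℝ) : ℂ) := by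
    rw [Complex.betaIntegral, ← intervalIntegral.integral_ofReal]
    apply intervalIntegral.integral_congr
    intro t ht
    rw [Set.uIcc_of_le zero_le_one] at ht
    show (t:ℂ)^((a:ℂ)-1) * ((1:ℂ)-(t:ℂ))^((b:ℂ)-1) = ((t ^ (a - 1) * (1 - t) ^ (b - 1) : ℝ) : ℂ)
    have e1 : ((a:ℂ) - 1) = ((a - 1 : ℝ) : ℂ) := by push_cast; ring
    have e2 : ((b:ℂ) - 1) = ((b - 1 : ℝ) : ℂ) := by push_cast; ring
    have e3 : ((1:ℂ) - (t:ℂ)) = ((1 - t : ℝ) : ℂ) := by push_cast; ring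
    rw [e1, e2, e3, ← Complex.ofReal_cpow ht.1, ← Complex.ofReal_cpow (by linarith [ht.2] : (0:ℝ) ≤ 1 - t),
      ← Complex.ofReal_mul]
  have hG : ∀ y : ℝ, Complex.Gamma (y : ℂ) = (Real.Gamma y : ℂ) := fun y => Complex.Gamma_ofReal y
  rw [show ((a:ℂ) + b) = ((a + b : ℝ) : ℂ) by push_cast; ring] at hC
  rw [hG, hG, hG, hB] at hC
  have hne : Real.Gamma (a+b) ≠ 0 := (Real.Gamma_pos_of_pos (by linarith)).ne'
  have hR : Real.Gamma a * Real.Gamma b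
      = Real.Gamma (a+b) * (∫ t in (0:ℝ)..1, t^(a-1)*(1-t)^(b-1)) := by exact_mod_cast hC
  rw [hR, mul_div_cancel_left₀ _ hne]

lemma beta_integrable {a b : ℝ} (ha : 0 < a) (hb : 0 < b) :
    IntervalIntegrable (fun t : ℝ => t^(a-1) * (1-t)^(b-1)) volume 0 1 := by
  apply IntervalIntegrable.trans (b := (1/2:ℝ))
  · apply IntervalIntegrable.mul_continuousOn (intervalIntegrable_rpow' (by linarith))
    apply ContinuousOn.rpow_const
    · fun_prop
    · intro t ht
      rw [Set.uIcc_of_le (by norm_num : (0:ℝ) ≤ 1/2)] at ht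
      left
      intro h; rw [sub_eq_zero] at h; linarith [ht.2]
  · apply IntervalIntegrable.continuousOn_mul (g := fun t : ℝ => t ^ (a-1))
    · have h1 : IntervalIntegrable (fun t : ℝ => t ^ (b-1)) volume 0 (1/2) :=
        intervalIntegrable_rpow' (by linarith)
      have h2 := h1.comp_sub_left 1
      norm_num at h2
      exact h2.symm
    · apply ContinuousOn.rpow_const
      · fun_prop
      · intro t ht
        rw [Set.uIcc_of_le (by norm_num : (1/2:ℝ) ≤ 1)] at ht
        left
        intro h; rw [h] at ht; norm_num at ht

theorem stmt_10 (c : ℝ) (hc : 0 < c) :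
    ∀ x ∈ Set.Ioo 0 c, 0 < Bc c x - Rc c x := by
  rintro x ⟨hx0, hxc⟩
  have hb0 : 0 < c - x := by linarith
  set f1 : ℝ → ℝ := fun t => t^(x-1) * (1-t)^(c-x-1) with hf1
  set f2 : ℝ → ℝ := fun t => (1 - t^(x-1)) / (1-t) with hf2
  set f3 : ℝ → ℝ := fun t => (1 - (1-t)^(c-x-1)) / t with hf3
  have h1 : IntervalIntegrable f1 volume 0 1 := beta_integrable hx0 hb0
  have h2 : IntervalIntegrable f2 volume 0 1 := intervalIntegrable_aux hx0
  have h3 : IntervalIntegrable f3 volume 0 1 := by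
    have := (intervalIntegrable_aux hb0).comp_sub_left 1
    norm_num at this
    exact this.symm
  have hI1 : Bc c x = ∫ t in (0:ℝ)..1, f1 t := by
    rw [Bc, show Real.Gamma c = Real.Gamma (x + (c - x)) by norm_num,
      real_beta hx0 hb0]
  have hI2 : digamma x + Real.eulerMascheroniConstant = ∫ t in (0:ℝ)..1, f2 t := by
    rw [intervalIntegral.integral_of_le zero_le_one]
    exact digamma_integral hx0
  have hI3 : digamma (c-x) + Real.eulerMascheroniConstant = ∫ t in (0:ℝ)..1, f3 t := by
    rw [digamma_integral hb0, ← intervalIntegral.integral_of_le zero_le_one]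
    have hcomp := intervalIntegral.integral_comp_sub_left
      (a := (0:ℝ)) (b := (1:ℝ)) (fun u : ℝ => (1 - u^(c-x-1)) / (1-u)) 1
    norm_num at hcomp
    rw [← hcomp]
  have hpos : 0 < ∫ t in (0:ℝ)..1, (f1 t + f2 t + f3 t) := by
    apply intervalIntegral.intervalIntegral_pos_of_pos_on ((h1.add h2).add h3) ?_ (by norm_num)
    intro t ht
    have ht0 : (0:ℝ) < t := ht.1
    have ht1 : t < 1 := ht.2
    have htne : t ≠ 0 := ht0.ne'
    have h1t : (0:ℝ) < 1 - t := by linarith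
    have h1tne : (1:ℝ) - t ≠ 0 := h1t.ne'
    have key : f1 t + f2 t + f3 t
        = (t⁻¹ - t^(x-1)) * ((1-t)⁻¹ - (1-t)^(c-x-1)) := by
      simp only [hf1, hf2, hf3]
      field_simp
      ring
    rw [key]
    have p1 : t^(x-1) < t⁻¹ := by
      rw [← Real.rpow_neg_one t]
      exact Real.rpow_lt_rpow_of_exponent_gt ht0 ht1 (by linarith)
    have p2 : (1-t)^(c-x-1) < (1-t)⁻¹ := by
      rw [← Real.rpow_neg_one (1-t)]
      exact Real.rpow_lt_rpow_of_exponent_gt h1t (by linarith) (by linarith)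
    exact mul_pos (sub_pos.mpr p1) (sub_pos.mpr p2)
  rw [intervalIntegral.integral_add (h1.add h2) h3, intervalIntegral.integral_add h1 h2] at hpos
  rw [Rc, hI1]
  rw [← hI2, ← hI3] at hpos
  linarith
end
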